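/- Mixed-k additivity with one pure factor: suppose α = |ψ⟩⟨ψ| is a pure k₁-UDA state on ⊗_{i=1}^m H_{A_i} and β is a k₂-UDA state on ⊗_{i=1}^n H_{B_i}. Let k = max{k₁, k₂} and assume k ≤ m and k ≤ n. Then α ⊗ β is k-UDA as an (m+n)-partite state. -/

import Mathlib

open scoped BigOperators ComplexOrder Matrix

abbrev Idx {ι : Type} (κ : ι → Type) : Type := ∀ i, κ i

def IsDensity {α : Type} [Fintype α] (M : Matrix α α ℂ) : Prop :=
  M.PosSemidef ∧ M.trace = 1

def pureState {α : Type} (ψ : α → ℂ) : Matrix α α ℂ :=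
  fun a b => ψ a * star (ψ b)

noncomputable def ptrace {ι : Type} [Fintype ι] [DecidableEq ι] (κ : ι → Type)
    [∀ i, Fintype (κ i)] (S : Finset ι) (M : Matrix (Idx κ) (Idx κ) ℂ) :
    Matrix (∀ i : {i // i ∈ S}, κ i) (∀ i : {i // i ∈ S}, κ i) ℂ :=
  fun a b => ∑ c : ∀ i : {i // i ∉ S}, κ i,
    M (fun i => if h : i ∈ S then a ⟨i, h⟩ else c ⟨i, h⟩)
      (fun i => if h : i ∈ S then b ⟨i, h⟩ else c ⟨i, h⟩)

def IsUDA {ι : Type} [Fintype ι] [DecidableEq ι] (κ : ι → Type)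
    [∀ i, Fintype (κ i)] (k : ℕ) (ρ : Matrix (Idx κ) (Idx κ) ℂ) : Prop :=
  ∀ σ : Matrix (Idx κ) (Idx κ) ℂ, IsDensity σ →
    (∀ S : Finset ι, S.card = k → ptrace κ S σ = ptrace κ S ρ) → σ = ρ

instance sumElimFintype {ι₁ ι₂ : Type} {κ₁ : ι₁ → Type} {κ₂ : ι₂ → Type}
    [∀ i, Fintype (κ₁ i)] [∀ i, Fintype (κ₂ i)] :
    ∀ i, Fintype (Sum.elim κ₁ κ₂ i)
  | .inl i => inferInstanceAs (Fintype (κ₁ i))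
  | .inr i => inferInstanceAs (Fintype (κ₂ i))

def tensProd {ι₁ ι₂ : Type} {κ₁ : ι₁ → Type} {κ₂ : ι₂ → Type}
    (ρ : Matrix (Idx κ₁) (Idx κ₁) ℂ) (σ : Matrix (Idx κ₂) (Idx κ₂) ℂ) :
    Matrix (Idx (Sum.elim κ₁ κ₂)) (Idx (Sum.elim κ₁ κ₂)) ℂ :=
  fun a b => ρ (fun i => a (.inl i)) (fun i => b (.inl i)) *
             σ (fun i => a (.inr i)) (fun i => b (.inr i))


/-! ### Partial trace machinery -/

section PT

variable {ι : Type} [Fintype ι] [DecidableEq ι] (κ : ι → Type) [∀ i, Fintype (κ i)]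

/-- Splitting the complement of `T` along a superset `T'`. -/
def splitPi {T T' : Finset ι} (hTT : T ⊆ T') :
    (∀ i : {i // i ∉ T}, κ i.1) ≃
      (∀ i : {i // i ∈ T' \ T}, κ i.1) × (∀ i : {i // i ∉ T'}, κ i.1) where
  toFun c := (fun i => c ⟨i.1, (Finset.mem_sdiff.mp i.2).2⟩,
              fun i => c ⟨i.1, fun h => i.2 (hTT h)⟩)
  invFun dc := fun i =>
    if h : i.1 ∈ T' then dc.1 ⟨i.1, Finset.mem_sdiff.mpr ⟨h, i.2⟩⟩ else dc.2 ⟨i.1, h⟩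
  left_inv c := by funext i; dsimp only; split <;> rfl
  right_inv dc := by
    refine Prod.ext ?_ ?_ <;> funext i <;> dsimp only
    · rw [dif_pos (Finset.mem_sdiff.mp i.2).1]
    · rw [dif_neg i.2]

/-- Extend an assignment on `T` to `T'` using values `d` on `T' \ T`. -/
def extFun {T T' : Finset ι} (hTT : T ⊆ T') (a : ∀ i : {i // i ∈ T}, κ i.1)
    (d : ∀ i : {i // i ∈ T' \ T}, κ i.1) : ∀ i : {i // i ∈ T'}, κ i.1 :=
  fun i => if h : i.1 ∈ T then a ⟨i.1, h⟩ else d ⟨i.1, Finset.mem_sdiff.mpr ⟨i.2, h⟩⟩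

lemma ptrace_expand {T T' : Finset ι} (hTT : T ⊆ T') (M : Matrix (Idx κ) (Idx κ) ℂ)
    (a b : ∀ i : {i // i ∈ T}, κ i.1) :
    ptrace κ T M a b = ∑ d : ∀ i : {i // i ∈ T' \ T}, κ i.1,
      ptrace κ T' M (extFun κ hTT a d) (extFun κ hTT b d) := by
  simp only [ptrace]
  rw [← Equiv.sum_comp (splitPi κ hTT).symm
    (fun c => M (fun i => if h : i ∈ T then a ⟨i, h⟩ else c ⟨i, h⟩)
      (fun i => if h : i ∈ T then b ⟨i, h⟩ else c ⟨i, h⟩)), Fintype.sum_prod_type]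
  refine Finset.sum_congr rfl fun d _ => Finset.sum_congr rfl fun cc _ => ?_
  congr 1 <;> funext i <;> by_cases h1 : i ∈ T
  · have h2 : i ∈ T' := hTT h1
    simp [splitPi, extFun, h1, h2]
  · by_cases h2 : i ∈ T' <;> simp [splitPi, extFun, h1, h2]
  · have h2 : i ∈ T' := hTT h1
    simp [splitPi, extFun, h1, h2]
  · by_cases h2 : i ∈ T' <;> simp [splitPi, extFun, h1, h2]

lemma ptrace_eq_of_subset {T T' : Finset ι} (hTT : T ⊆ T')
    {M N : Matrix (Idx κ) (Idx κ) ℂ} (h : ptrace κ T' M = ptrace κ T' N) :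
    ptrace κ T M = ptrace κ T N := by
  funext a b
  rw [ptrace_expand κ hTT M a b, ptrace_expand κ hTT N a b, h]

end PT

/-! ### Auxiliary definitions -/

section Aux

variable {ι₁ ι₂ : Type} {κ₁ : ι₁ → Type} {κ₂ : ι₂ → Type}

/-- Glue two index assignments into one on the sum. -/
def glue (a : Idx κ₁) (b : Idx κ₂) : Idx (Sum.elim κ₁ κ₂) :=
  fun i => match i with
  | .inl j => a j
  | .inr j => b j

@[simp] lemma glue_inl (a : Idx κ₁) (b : Idx κ₂) (j : ι₁) : glue a b (.inl j) = a j := rfl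
@[simp] lemma glue_inr (a : Idx κ₁) (b : Idx κ₂) (j : ι₂) : glue a b (.inr j) = b j := rfl

lemma glue_proj (x : Idx (Sum.elim κ₁ κ₂)) :
    glue (fun j => x (.inl j)) (fun j => x (.inr j)) = x := by
  funext i; cases i <;> rfl

def glueEquiv : (Idx κ₁ × Idx κ₂) ≃ Idx (Sum.elim κ₁ κ₂) where
  toFun p := glue p.1 p.2
  invFun x := (fun j => x (.inl j), fun j => x (.inr j))
  left_inv p := rfl
  right_inv x := glue_proj x

variable [DecidableEq ι₁] [DecidableEq ι₂] [Fintype ι₁] [Fintype ι₂] [∀ i, Fintype (κ₁ i)] [∀ i, Fintype (κ₂ i)]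

/-- Marginal onto the first factor. -/
noncomputable def margA (M : Matrix (Idx (Sum.elim κ₁ κ₂)) (Idx (Sum.elim κ₁ κ₂)) ℂ) :
    Matrix (Idx κ₁) (Idx κ₁) ℂ :=
  fun a a' => ∑ b : Idx κ₂, M (glue a b) (glue a' b)

/-- Marginal onto the second factor. -/
noncomputable def margB (M : Matrix (Idx (Sum.elim κ₁ κ₂)) (Idx (Sum.elim κ₁ κ₂)) ℂ) :
    Matrix (Idx κ₂) (Idx κ₂) ℂ :=
  fun b b' => ∑ a : Idx κ₁, M (glue a b) (glue a b')

lemma margA_trace (M : Matrix (Idx (Sum.elim κ₁ κ₂)) (Idx (Sum.elim κ₁ κ₂)) ℂ) :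
    (margA M).trace = M.trace := by
  rw [Matrix.trace, Matrix.trace]
  rw [← Equiv.sum_comp (glueEquiv (κ₁ := κ₁) (κ₂ := κ₂)) (fun x => M.diag x), Fintype.sum_prod_type]
  rfl

lemma margB_trace (M : Matrix (Idx (Sum.elim κ₁ κ₂)) (Idx (Sum.elim κ₁ κ₂)) ℂ) :
    (margB M).trace = M.trace := by
  rw [Matrix.trace, Matrix.trace]
  rw [← Equiv.sum_comp (glueEquiv (κ₁ := κ₁) (κ₂ := κ₂)) (fun x => M.diag x), Fintype.sum_prod_type]
  rw [Finset.sum_comm]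
  rfl

lemma margA_tensProd (ρ : Matrix (Idx κ₁) (Idx κ₁) ℂ) (τ : Matrix (Idx κ₂) (Idx κ₂) ℂ)
    (hτ : τ.trace = 1) : margA (tensProd ρ τ) = ρ := by
  funext a a'
  simp only [margA, tensProd]
  have : ∀ b : Idx κ₂, ρ (fun i => glue a b (.inl i)) (fun i => glue a' b (.inl i)) *
      τ (fun i => glue a b (.inr i)) (fun i => glue a' b (.inr i)) = ρ a a' * τ b b := by
    intro b; rfl
  rw [Finset.sum_congr rfl (fun b _ => this b), ← Finset.mul_sum]
  have : ∑ b : Idx κ₂, τ b b = 1 := hτ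
  rw [this, mul_one]

lemma margB_tensProd (ρ : Matrix (Idx κ₁) (Idx κ₁) ℂ) (τ : Matrix (Idx κ₂) (Idx κ₂) ℂ)
    (hρ : ρ.trace = 1) : margB (tensProd ρ τ) = τ := by
  funext b b'
  simp only [margB, tensProd]
  have : ∀ a : Idx κ₁, ρ (fun i => glue a b (.inl i)) (fun i => glue a b' (.inl i)) *
      τ (fun i => glue a b (.inr i)) (fun i => glue a b' (.inr i)) = ρ a a * τ b b' := by
    intro a; rfl
  rw [Finset.sum_congr rfl (fun a _ => this a), ← Finset.sum_mul]
  have : ∑ a : Idx κ₁, ρ a a = 1 := hρ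
  rw [this, one_mul]

/-- The column operator for the first marginal of `Bᴴ * B`. -/
def colOp (B : Matrix (Idx (Sum.elim κ₁ κ₂)) (Idx (Sum.elim κ₁ κ₂)) ℂ) :
    Matrix (Idx (Sum.elim κ₁ κ₂) × Idx κ₂) (Idx κ₁) ℂ :=
  Matrix.of (fun p a => B p.1 (glue a p.2))

lemma margA_CC (B : Matrix (Idx (Sum.elim κ₁ κ₂)) (Idx (Sum.elim κ₁ κ₂)) ℂ) :
    margA (Bᴴ * B) = (colOp B)ᴴ * colOp B := by
  funext a a'
  rw [Matrix.mul_apply, Fintype.sum_prod_type, Finset.sum_comm]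
  simp only [margA, Matrix.mul_apply, Matrix.conjTranspose_apply, colOp, Matrix.of_apply]

lemma margA_posSemidef {M : Matrix (Idx (Sum.elim κ₁ κ₂)) (Idx (Sum.elim κ₁ κ₂)) ℂ}
    (hM : M.PosSemidef) : (margA M).PosSemidef := by
  obtain ⟨B, hB⟩ := (by open scoped MatrixOrder in classical exact CStarAlgebra.nonneg_iff_eq_star_mul_self.mp hM.nonneg :
    ∃ B : Matrix (Idx (Sum.elim κ₁ κ₂)) (Idx (Sum.elim κ₁ κ₂)) ℂ, M = Bᴴ * B)
  rw [hB, margA_CC]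
  exact Matrix.posSemidef_conjTranspose_mul_self _

lemma margB_posSemidef {M : Matrix (Idx (Sum.elim κ₁ κ₂)) (Idx (Sum.elim κ₁ κ₂)) ℂ}
    (hM : M.PosSemidef) : (margB M).PosSemidef := by
  obtain ⟨B, hB⟩ := (by open scoped MatrixOrder in classical exact CStarAlgebra.nonneg_iff_eq_star_mul_self.mp hM.nonneg :
    ∃ B : Matrix (Idx (Sum.elim κ₁ κ₂)) (Idx (Sum.elim κ₁ κ₂)) ℂ, M = Bᴴ * B)
  set C : Matrix (Idx (Sum.elim κ₁ κ₂) × Idx κ₁) (Idx κ₂) ℂ :=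
    Matrix.of (fun p b => B p.1 (glue p.2 b)) with hC
  have : margB M = Cᴴ * C := by
    funext b b'
    rw [Matrix.mul_apply, Fintype.sum_prod_type, Finset.sum_comm]
    simp only [margB, hB, Matrix.mul_apply, Matrix.conjTranspose_apply, hC, Matrix.of_apply]
  rw [this]
  exact Matrix.posSemidef_conjTranspose_mul_self C


/-- If the first marginal of a positive semidefinite matrix is the pure state `ψ`
(with `ψ` normalized), then the matrix factorizes as a tensor product. -/
lemma pure_factor {ψ : Idx κ₁ → ℂ} (hψ : ∑ a, ψ a * star (ψ a) = 1)
    {σ : Matrix (Idx (Sum.elim κ₁ κ₂)) (Idx (Sum.elim κ₁ κ₂)) ℂ} (hσ : σ.PosSemidef)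
    (hA : margA σ = pureState ψ) :
    σ = tensProd (pureState ψ) (margB σ) := by
  have hψ' : ∑ a, star (ψ a) * ψ a = 1 := by
    rw [← hψ]; exact Finset.sum_congr rfl fun a _ => mul_comm _ _
  obtain ⟨B, hB⟩ := (by open scoped MatrixOrder in classical exact CStarAlgebra.nonneg_iff_eq_star_mul_self.mp hσ.nonneg :
    ∃ B : Matrix (Idx (Sum.elim κ₁ κ₂)) (Idx (Sum.elim κ₁ κ₂)) ℂ, σ = Bᴴ * B)
  have hCC : pureState ψ = (colOp B)ᴴ * colOp B := by
    rw [← hA, hB, margA_CC]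
  -- Step 1: every vector orthogonal to ψ is killed by the columns of B
  have key : ∀ x : Idx κ₁ → ℂ, (∑ a, star (x a) * ψ a) = 0 →
      ∀ t (b : Idx κ₂), (∑ a, B t (glue a b) * x a) = 0 := by
    intro x hx t b
    have hq : star x ⬝ᵥ (pureState ψ) *ᵥ x = 0 := by
      have e1 : star x ⬝ᵥ (pureState ψ) *ᵥ x
          = ∑ a, ∑ a', (star (x a) * ψ a) * (star (ψ a') * x a') := by
        simp only [dotProduct, Matrix.mulVec, pureState, Finset.mul_sum, Pi.star_apply]
        exact Finset.sum_congr rfl fun a _ => Finset.sum_congr rfl fun a' _ => by ring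
      rw [e1, ← Finset.sum_mul_sum, hx, zero_mul]
    rw [hCC, ← Matrix.mulVec_mulVec, Matrix.dotProduct_mulVec, Matrix.vecMul_conjTranspose,
      star_star, dotProduct_star_self_eq_zero] at hq
    have := congrFun hq (t, b)
    simpa [Matrix.mulVec, dotProduct, colOp] using this
  -- Step 2: each column of B is proportional to star ψ
  set D : Idx (Sum.elim κ₁ κ₂) → Idx κ₂ → ℂ := fun t b => ∑ a, ψ a * B t (glue a b) with hD
  have hrep : ∀ t b a, B t (glue a b) = D t b * star (ψ a) := by
    intro t b
    set x : Idx κ₁ → ℂ := fun a => star (B t (glue a b)) - star (D t b) * ψ a with hxdef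
    have hx : ∑ a, star (x a) * ψ a = 0 := by
      have e : ∀ a, star (x a) * ψ a = ψ a * B t (glue a b) - D t b * (star (ψ a) * ψ a) := by
        intro a; simp only [hxdef, star_sub, star_mul, star_star]; ring
      rw [Finset.sum_congr rfl fun a _ => e a, Finset.sum_sub_distrib, ← Finset.mul_sum, hψ',
        mul_one, hD]
      exact sub_self _
    have h0 : ∑ a, B t (glue a b) * x a = 0 := key x hx t b
    have h2 : ∑ a, star (ψ a) * x a = 0 := by
      have e : ∀ a, star (ψ a) * x a
          = star (ψ a * B t (glue a b)) - star (D t b) * (star (ψ a) * ψ a) := by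
        intro a; simp only [hxdef, star_mul]; ring
      rw [Finset.sum_congr rfl fun a _ => e a, Finset.sum_sub_distrib, ← star_sum,
        ← Finset.mul_sum, hψ', mul_one, hD]
      exact sub_self _
    have h3 : ∑ a, star (x a) * x a = 0 := by
      have e : ∀ a, star (x a) * x a
          = B t (glue a b) * x a - D t b * (star (ψ a) * x a) := by
        intro a; simp only [hxdef, star_sub, star_mul, star_star]; ring
      rw [Finset.sum_congr rfl fun a _ => e a, Finset.sum_sub_distrib, ← Finset.mul_sum, h2,
        mul_zero, sub_zero]
      exact h0
    have h4 : x = 0 := by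
      have h3' : star x ⬝ᵥ x = 0 := h3
      rwa [dotProduct_star_self_eq_zero] at h3'
    intro a
    have := congrFun h4 a
    simp only [hxdef, Pi.zero_apply, sub_eq_zero] at this
    calc B t (glue a b) = star (star (B t (glue a b))) := (star_star _).symm
      _ = star (star (D t b) * ψ a) := by rw [this]
      _ = D t b * star (ψ a) := by rw [star_mul, star_star, mul_comm]
  -- Step 3: conclude
  have hentry : ∀ (a a' : Idx κ₁) (b b' : Idx κ₂),
      σ (glue a b) (glue a' b') = (ψ a * star (ψ a')) * ∑ t, star (D t b) * D t b' := by
    intro a a' b b'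
    rw [hB, Matrix.mul_apply, Finset.mul_sum]
    refine Finset.sum_congr rfl fun t _ => ?_
    rw [Matrix.conjTranspose_apply, hrep t b a, hrep t b' a', star_mul, star_star]
    ring
  have hmargB : ∀ b b', margB σ b b' = ∑ t, star (D t b) * D t b' := by
    intro b b'
    simp only [margB, hentry, ← Finset.sum_mul]
    rw [hψ, one_mul]
  funext z z'
  rw [← glue_proj z, ← glue_proj z']
  simp only [tensProd, glue_inl, glue_inr, hentry, hmargB, pureState]
  exact (hentry _ _ _ _).trans (congrArg _ (hmargB _ _).symm)

/-! ### Marginals versus partial traces -/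

def inlEmb : ι₁ ↪ ι₁ ⊕ ι₂ := ⟨Sum.inl, Sum.inl_injective⟩
def inrEmb : ι₂ ↪ ι₁ ⊕ ι₂ := ⟨Sum.inr, Sum.inr_injective⟩

@[simp] lemma mem_map_inlEmb {T : Finset ι₁} {j : ι₁} :
    (Sum.inl j : ι₁ ⊕ ι₂) ∈ T.map inlEmb ↔ j ∈ T := by
  simp [Finset.mem_map, inlEmb]

@[simp] lemma not_mem_map_inlEmb {T : Finset ι₁} {j : ι₂} :
    (Sum.inr j : ι₁ ⊕ ι₂) ∉ T.map inlEmb := by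
  simp [Finset.mem_map, inlEmb]

@[simp] lemma mem_map_inrEmb {T : Finset ι₂} {j : ι₂} :
    (Sum.inr j : ι₁ ⊕ ι₂) ∈ T.map inrEmb ↔ j ∈ T := by
  simp [Finset.mem_map, inrEmb]

@[simp] lemma not_mem_map_inrEmb {T : Finset ι₂} {j : ι₁} :
    (Sum.inl j : ι₁ ⊕ ι₂) ∉ T.map inrEmb := by
  simp [Finset.mem_map, inrEmb]

def liftA (T : Finset ι₁) (a : ∀ j : {j // j ∈ T}, κ₁ j.1) :
    ∀ i : {i // i ∈ T.map (inlEmb (ι₂ := ι₂))}, Sum.elim κ₁ κ₂ i.1 :=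
  fun i => match i with
  | ⟨.inl j, h⟩ => a ⟨j, mem_map_inlEmb.mp h⟩
  | ⟨.inr _, h⟩ => absurd h (not_mem_map_inlEmb)

def liftB (T : Finset ι₂) (b : ∀ j : {j // j ∈ T}, κ₂ j.1) :
    ∀ i : {i // i ∈ T.map (inrEmb (ι₁ := ι₁))}, Sum.elim κ₁ κ₂ i.1 :=
  fun i => match i with
  | ⟨.inr j, h⟩ => b ⟨j, mem_map_inrEmb.mp h⟩
  | ⟨.inl _, h⟩ => absurd h (not_mem_map_inrEmb)

/-- Complement splitting for a set of `inl`-indices. -/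
def splitA (T : Finset ι₁) :
    ((∀ j : {j // j ∉ T}, κ₁ j.1) × Idx κ₂) ≃
      (∀ i : {i // i ∉ T.map (inlEmb (ι₂ := ι₂))}, Sum.elim κ₁ κ₂ i.1) where
  toFun p := fun i => match i with
    | ⟨.inl j, h⟩ => p.1 ⟨j, fun hj => h (mem_map_inlEmb.mpr hj)⟩
    | ⟨.inr j, _⟩ => p.2 j
  invFun cc := (fun j => cc ⟨.inl j.1, fun h => j.2 (mem_map_inlEmb.mp h)⟩,
                fun j => cc ⟨.inr j, not_mem_map_inlEmb⟩)
  left_inv p := rfl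
  right_inv cc := by
    funext i
    obtain ⟨i, hi⟩ := i
    cases i <;> rfl

def splitB (T : Finset ι₂) :
    ((∀ j : {j // j ∉ T}, κ₂ j.1) × Idx κ₁) ≃
      (∀ i : {i // i ∉ T.map (inrEmb (ι₁ := ι₁))}, Sum.elim κ₁ κ₂ i.1) where
  toFun p := fun i => match i with
    | ⟨.inr j, h⟩ => p.1 ⟨j, fun hj => h (mem_map_inrEmb.mpr hj)⟩
    | ⟨.inl j, _⟩ => p.2 j
  invFun cc := (fun j => cc ⟨.inr j.1, fun h => j.2 (mem_map_inrEmb.mp h)⟩,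
                fun j => cc ⟨.inl j, not_mem_map_inrEmb⟩)
  left_inv p := rfl
  right_inv cc := by
    funext i
    obtain ⟨i, hi⟩ := i
    cases i <;> rfl

lemma margA_ptrace (T : Finset ι₁) (M : Matrix (Idx (Sum.elim κ₁ κ₂)) (Idx (Sum.elim κ₁ κ₂)) ℂ)
    (a b : ∀ j : {j // j ∈ T}, κ₁ j.1) :
    ptrace κ₁ T (margA M) a b
      = ptrace (Sum.elim κ₁ κ₂) (T.map inlEmb) M (liftA T a) (liftA T b) := by
  simp only [ptrace, margA]
  rw [← Equiv.sum_comp (splitA (κ₁ := κ₁) (κ₂ := κ₂) T)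
    (fun cc => M (fun i => if h : i ∈ T.map inlEmb then liftA T a ⟨i, h⟩ else cc ⟨i, h⟩)
      (fun i => if h : i ∈ T.map inlEmb then liftA T b ⟨i, h⟩ else cc ⟨i, h⟩)),
    Fintype.sum_prod_type]
  refine Finset.sum_congr rfl fun c _ => Finset.sum_congr rfl fun y _ => ?_
  congr 1 <;> funext i <;> rcases i with j | j
  · by_cases hj : j ∈ T
    · rw [dif_pos (mem_map_inlEmb.mpr hj)]
      simp only [glue_inl]
      rw [dif_pos hj]
      rfl
    · rw [dif_neg (fun h => hj (mem_map_inlEmb.mp h))]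
      simp only [glue_inl]
      rw [dif_neg hj]
      rfl
  · rw [dif_neg (not_mem_map_inlEmb (T := T) (j := j))]
    rfl
  · by_cases hj : j ∈ T
    · rw [dif_pos (mem_map_inlEmb.mpr hj)]
      simp only [glue_inl]
      rw [dif_pos hj]
      rfl
    · rw [dif_neg (fun h => hj (mem_map_inlEmb.mp h))]
      simp only [glue_inl]
      rw [dif_neg hj]
      rfl
  · rw [dif_neg (not_mem_map_inlEmb (T := T) (j := j))]
    rfl

lemma margB_ptrace (T : Finset ι₂) (M : Matrix (Idx (Sum.elim κ₁ κ₂)) (Idx (Sum.elim κ₁ κ₂)) ℂ)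
    (a b : ∀ j : {j // j ∈ T}, κ₂ j.1) :
    ptrace κ₂ T (margB M) a b
      = ptrace (Sum.elim κ₁ κ₂) (T.map inrEmb) M (liftB T a) (liftB T b) := by
  simp only [ptrace, margB]
  rw [← Equiv.sum_comp (splitB (κ₁ := κ₁) (κ₂ := κ₂) T)
    (fun cc => M (fun i => if h : i ∈ T.map inrEmb then liftB T a ⟨i, h⟩ else cc ⟨i, h⟩)
      (fun i => if h : i ∈ T.map inrEmb then liftB T b ⟨i, h⟩ else cc ⟨i, h⟩)),
    Fintype.sum_prod_type]
  refine Finset.sum_congr rfl fun c _ => Finset.sum_congr rfl fun y _ => ?_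
  congr 1 <;> funext i <;> rcases i with j | j
  · rw [dif_neg (not_mem_map_inrEmb (T := T) (j := j))]
    rfl
  · by_cases hj : j ∈ T
    · rw [dif_pos (mem_map_inrEmb.mpr hj)]
      simp only [glue_inr]
      rw [dif_pos hj]
      rfl
    · rw [dif_neg (fun h => hj (mem_map_inrEmb.mp h))]
      simp only [glue_inr]
      rw [dif_neg hj]
      rfl
  · rw [dif_neg (not_mem_map_inrEmb (T := T) (j := j))]
    rfl
  · by_cases hj : j ∈ T
    · rw [dif_pos (mem_map_inrEmb.mpr hj)]
      simp only [glue_inr]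
      rw [dif_pos hj]
      rfl
    · rw [dif_neg (fun h => hj (mem_map_inrEmb.mp h))]
      simp only [glue_inr]
      rw [dif_neg hj]
      rfl

end Aux

theorem mixed_k_additivity_pure_factor {m n : ℕ}
    (κA : Fin m → Type) (κB : Fin n → Type)
    [∀ i, Fintype (κA i)] [∀ i, Fintype (κB i)] (k₁ k₂ : ℕ)
    (hkm : max k₁ k₂ ≤ m) (hkn : max k₁ k₂ ≤ n)
    (ψ : Idx κA → ℂ) (hψ : ∑ a, ψ a * star (ψ a) = 1)
    (hαUDA : IsUDA κA k₁ (pureState ψ))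
    (β : Matrix (Idx κB) (Idx κB) ℂ) (hβ : IsDensity β)
    (hβUDA : IsUDA κB k₂ β) :
    IsUDA (Sum.elim κA κB) (max k₁ k₂) (tensProd (pureState ψ) β) := by
  intro σ hσ hmarg
  have htrψ : (pureState ψ).trace = 1 := by
    rw [← hψ]; exact Finset.sum_congr rfl fun a _ => rfl
  -- the A-marginal of σ is the pure state
  have hmA' : ∀ T : Finset (Fin m), T.card = k₁ →
      ptrace κA T (margA σ) = ptrace κA T (pureState ψ) := by
    intro T hT
    obtain ⟨T', hTT', hcard⟩ := Finset.exists_superset_card_eq (n := max k₁ k₂)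
      (by rw [hT]; exact le_max_left _ _) (by simpa using hkm)
    refine ptrace_eq_of_subset κA hTT' ?_
    have hS := hmarg (T'.map inlEmb) (by rw [Finset.card_map, hcard])
    have h1 : ptrace κA T' (margA σ)
        = ptrace κA T' (margA (tensProd (pureState ψ) β)) := by
      funext a b; rw [margA_ptrace, margA_ptrace, hS]
    rwa [margA_tensProd _ _ hβ.2] at h1
  have hAeq : margA σ = pureState ψ :=
    hαUDA (margA σ) ⟨margA_posSemidef hσ.1, by rw [margA_trace, hσ.2]⟩ hmA'
  -- the B-marginal of σ is β
  have hmB' : ∀ T : Finset (Fin n), T.card = k₂ →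
      ptrace κB T (margB σ) = ptrace κB T β := by
    intro T hT
    obtain ⟨T', hTT', hcard⟩ := Finset.exists_superset_card_eq (n := max k₁ k₂)
      (by rw [hT]; exact le_max_right _ _) (by simpa using hkn)
    refine ptrace_eq_of_subset κB hTT' ?_
    have hS := hmarg (T'.map inrEmb) (by rw [Finset.card_map, hcard])
    have h1 : ptrace κB T' (margB σ)
        = ptrace κB T' (margB (tensProd (pureState ψ) β)) := by
      funext a b; rw [margB_ptrace, margB_ptrace, hS]
    rwa [margB_tensProd _ _ htrψ] at h1
  have hBeq : margB σ = β :=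
    hβUDA (margB σ) ⟨margB_posSemidef hσ.1, by rw [margB_trace, hσ.2]⟩ hmB'
  rw [pure_factor hψ hσ.1 hAeq, hBeq]
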